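/- For all n ≥ 2, the supremum over measurable nonnegative functions f₁,…,fₙ on [0,1]^{n-1} of ∫_{[0,1]^n} ∏_{i=1}^n ε(fᵢ(x_{-i}) xᵢ) dΛ^n equals 1/2. (The continuous Levine hat game has optimal winning probability 1/2.) -/

import Mathlib

open MeasureTheory

noncomputable def eps (t : ℝ) : ℝ := (⌊t⌋ : ℝ) - 2 * (⌊t / 2⌋ : ℝ)

lemma eps_eq (t : ℝ) : eps t = if Odd ⌊t⌋ then 1 else 0 := by
  have h1 : (2 * ⌊t / 2⌋ : ℝ) ≤ t := by
    have := Int.floor_le (t / 2)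
    push_cast
    linarith
  have h2 : t < 2 * ⌊t / 2⌋ + 2 := by
    have := Int.lt_floor_add_one (t / 2)
    push_cast
    linarith
  have hm1 : 2 * ⌊t / 2⌋ ≤ ⌊t⌋ := by
    rw [Int.le_floor]
    push_cast
    linarith [h1]
  have hm2 : ⌊t⌋ < 2 * ⌊t / 2⌋ + 2 := by
    have hf := Int.floor_le t
    have : (⌊t⌋ : ℝ) < 2 * ⌊t / 2⌋ + 2 := by linarith
    exact_mod_cast this
  unfold eps
  rcases Int.even_or_odd ⌊t⌋ with he | ho
  · rw [if_neg (by simpa [Int.not_odd_iff_even] using he)]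
    obtain ⟨j, hj⟩ := he
    have : ⌊t⌋ = 2 * ⌊t / 2⌋ := by omega
    rw [this]; push_cast; ring
  · rw [if_pos ho]
    obtain ⟨j, hj⟩ := ho
    have : ⌊t⌋ = 2 * ⌊t / 2⌋ + 1 := by omega
    rw [this]; push_cast; ring

lemma eps_nonneg (t : ℝ) : 0 ≤ eps t := by rw [eps_eq]; split <;> norm_num

lemma eps_le_one (t : ℝ) : eps t ≤ 1 := by rw [eps_eq]; split <;> norm_num

lemma eps_zero_or_one (t : ℝ) : eps t = 0 ∨ eps t = 1 := by
  rw [eps_eq]; split <;> simp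

lemma measurable_eps : Measurable eps := by
  unfold eps
  have hc : Measurable (Int.cast : ℤ → ℝ) := measurable_from_top
  apply Measurable.sub
  · exact hc.comp measurable_id.floor
  · exact (hc.comp (measurable_id.div_const 2).floor).const_mul 2
lemma eps_intervalIntegrable (c d : ℝ) : IntervalIntegrable eps volume c d := by
  rw [intervalIntegrable_iff]
  refine Integrable.mono' (g := fun _ => (1:ℝ)) ((integrableOn_const_iff (by simp)).mpr (Or.inr ?_)) measurable_eps.aestronglyMeasurable ?_
  · rw [Set.uIoc, Real.volume_Ioc]
    exact ENNReal.ofReal_lt_top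
  · filter_upwards with t
    rw [Real.norm_eq_abs, abs_le]
    exact ⟨by linarith [eps_nonneg t], eps_le_one t⟩

lemma eps_add_two (t : ℝ) : eps (t + 2) = eps t := by
  have h1 : ⌊t + 2⌋ = ⌊t⌋ + 2 := by
    have := Int.floor_add_intCast t 2
    push_cast at this ⊢
    exact_mod_cast this
  have h2 : ⌊(t + 2) / 2⌋ = ⌊t / 2⌋ + 1 := by
    have : (t + 2) / 2 = t / 2 + 1 := by ring
    rw [this]
    exact_mod_cast Int.floor_add_intCast (t/2) 1
  unfold eps
  rw [h1, h2]
  push_cast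
  ring

noncomputable def E (a : ℝ) : ℝ := ∫ t in (0:ℝ)..a, eps t

lemma E_base {a : ℝ} (h0 : 0 ≤ a) (h2 : a ≤ 2) :
    E a = if a ≤ 1 then 0 else a - 1 := by
  have hcong : ∀ t ∈ Set.uIcc (0:ℝ) a, eps t = Set.indicator (Set.Ico (1:ℝ) 2) (fun _ => 1) t := by
    intro t ht
    rw [Set.uIcc_of_le h0] at ht
    obtain ⟨ht0, hta⟩ := ht
    rw [eps_eq]
    by_cases h : t ∈ Set.Ico (1:ℝ) 2
    · rw [Set.indicator_of_mem h]
      have : ⌊t⌋ = 1 := Int.floor_eq_iff.mpr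
        ⟨by push_cast; exact h.1, by push_cast; linarith [h.2]⟩
      rw [this]
      simp [Int.odd_iff]
    · rw [Set.indicator_of_notMem h]
      simp only [Set.mem_Ico, not_and, not_lt] at h
      by_cases h1 : t < 1
      · have : ⌊t⌋ = 0 := Int.floor_eq_iff.mpr
          ⟨by push_cast; exact ht0, by push_cast; linarith⟩
        rw [this]; simp
      · push_neg at h1
        have h2t : 2 ≤ t := h h1
        have hte : t = 2 := le_antisymm (le_trans hta h2) h2t
        subst hte
        norm_num
  rw [E, intervalIntegral.integral_congr hcong,
    intervalIntegral.integral_of_le h0, MeasureTheory.setIntegral_indicator measurableSet_Ico]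
  rw [MeasureTheory.setIntegral_const]
  simp only [smul_eq_mul, mul_one]
  by_cases hle : a ≤ 1
  · rw [if_pos hle]
    have hsub : Set.Ioc 0 a ∩ Set.Ico 1 2 ⊆ Set.Icc (1:ℝ) a := by
      rintro t ⟨⟨_, hta⟩, ⟨h1t, _⟩⟩; exact ⟨h1t, hta⟩
    have : volume (Set.Ioc 0 a ∩ Set.Ico 1 2) = 0 := by
      refine le_antisymm ?_ (by positivity)
      calc volume (Set.Ioc 0 a ∩ Set.Ico 1 2) ≤ volume (Set.Icc (1:ℝ) a) := measure_mono hsub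
      _ = ENNReal.ofReal (a - 1) := Real.volume_Icc
      _ = 0 := by rw [ENNReal.ofReal_eq_zero]; linarith
    rw [measureReal_def, this]; simp
  · push_neg at hle
    rw [if_neg (not_le.mpr hle)]
    have hvol : volume (Set.Ioc 0 a ∩ Set.Ico 1 2) = ENNReal.ofReal (a - 1) := by
      apply le_antisymm
      · calc volume (Set.Ioc 0 a ∩ Set.Ico 1 2) ≤ volume (Set.Icc (1:ℝ) a) := by
              apply measure_mono; rintro t ⟨⟨_, hta⟩, ⟨h1t, _⟩⟩; exact ⟨h1t, hta⟩
          _ = ENNReal.ofReal (a - 1) := Real.volume_Icc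
      · calc ENNReal.ofReal (a - 1) = volume (Set.Ico (1:ℝ) a) := Real.volume_Ico.symm
          _ ≤ volume (Set.Ioc 0 a ∩ Set.Ico 1 2) := by
              apply measure_mono
              rintro t ⟨h1t, hta⟩
              exact ⟨⟨by linarith, le_of_lt hta⟩, ⟨h1t, by linarith⟩⟩
    rw [measureReal_def, hvol, ENNReal.toReal_ofReal (by linarith)]

lemma E_two : E 2 = 1 := by rw [E_base (by norm_num) (by norm_num)]; norm_num

lemma E_add_two {a : ℝ} (_h : 0 ≤ a) : E (a + 2) = E a + 1 := by
  have hsplit : E (a + 2) = (∫ t in (0:ℝ)..2, eps t) + ∫ t in (2:ℝ)..(a+2), eps t := by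
    rw [E, ← intervalIntegral.integral_add_adjacent_intervals
      (eps_intervalIntegrable 0 2) (eps_intervalIntegrable 2 (a+2))]
  have h2 : (∫ t in (2:ℝ)..(a+2), eps t) = E a := by
    have h := intervalIntegral.integral_comp_add_right (a := (0:ℝ)) (b := a) eps 2
    simp only [zero_add] at h
    rw [← h, E]
    exact intervalIntegral.integral_congr fun t _ => eps_add_two t
  rw [hsplit, h2]
  rw [show (∫ t in (0:ℝ)..2, eps t) = E 2 from rfl, E_two]
  ring

lemma E_bounds : ∀ a : ℝ, 0 ≤ a → a/2 - 1/2 ≤ E a ∧ E a ≤ a/2 := by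
  have key : ∀ k : ℕ, ∀ a : ℝ, 0 ≤ a → a ≤ 2*(k+1) → a/2 - 1/2 ≤ E a ∧ E a ≤ a/2 := by
    intro k
    induction k with
    | zero =>
      intro a h0 h2
      push_cast at h2
      rw [E_base h0 (by linarith)]
      split <;> constructor <;> linarith
    | succ m ih =>
      intro a h0 hub
      by_cases h : a ≤ 2
      · rw [E_base h0 h]; split <;> constructor <;> linarith
      · push_neg at h
        have h0' : 0 ≤ a - 2 := by linarith
        have hE : E a = E (a - 2) + 1 := by
          have := E_add_two h0'
          rw [sub_add_cancel] at this
          exact this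
        obtain ⟨l, r⟩ := ih (a - 2) h0' (by push_cast at hub ⊢; linarith)
        rw [hE]
        constructor <;> linarith
  intro a h0
  obtain ⟨k, hk⟩ := exists_nat_ge a
  exact key k a h0 (by push_cast; linarith)

lemma L_le_half {a : ℝ} (ha : 0 ≤ a) : (∫ t in (0:ℝ)..1, eps (a * t)) ≤ 1/2 := by
  rcases eq_or_lt_of_le ha with h | h
  · rw [← h]
    simp [eps_eq]
  · rw [intervalIntegral.integral_comp_mul_left eps (ne_of_gt h)]
    simp only [mul_zero, mul_one, smul_eq_mul]
    have := (E_bounds a ha).2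
    rw [show (∫ t in (0:ℝ)..a, eps t) = E a from rfl]
    rw [inv_mul_le_iff₀ h]
    linarith

lemma L_ge {a : ℝ} (ha : 0 < a) : 1/2 - 1/(2*a) ≤ ∫ t in (0:ℝ)..1, eps (a * t) := by
  rw [intervalIntegral.integral_comp_mul_left eps (ne_of_gt ha)]
  simp only [mul_zero, mul_one, smul_eq_mul]
  have := (E_bounds a (le_of_lt ha)).1
  rw [show (∫ t in (0:ℝ)..a, eps t) = E a from rfl]
  calc 1/2 - 1/(2*a) = a⁻¹ * (a/2 - 1/2) := by field_simp
    _ ≤ a⁻¹ * E a := mul_le_mul_of_nonneg_left this (by positivity)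

lemma L_nonneg (a : ℝ) : 0 ≤ ∫ t in (0:ℝ)..1, eps (a * t) := by
  apply intervalIntegral.integral_nonneg (by norm_num)
  intro t _
  exact eps_nonneg _
noncomputable def mu1 : Measure ℝ := volume.restrict (Set.Icc 0 1)

instance : IsProbabilityMeasure mu1 := by
  constructor
  rw [mu1, Measure.restrict_apply_univ, Real.volume_Icc]
  norm_num

lemma mu1_integral_eps (a : ℝ) :
    ∫ t, eps (a * t) ∂mu1 = ∫ t in (0:ℝ)..1, eps (a * t) := by
  rw [mu1, ← Measure.restrict_congr_set Ioc_ae_eq_Icc,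
    intervalIntegral.integral_of_le zero_le_one]

lemma restrict_pi_pi {ι : Type*} [Fintype ι] :
    (Measure.pi (fun _ : ι => (volume : Measure ℝ))).restrict (Set.univ.pi fun _ => Set.Icc (0:ℝ) 1)
      = Measure.pi (fun _ : ι => mu1) := by
  refine (Measure.pi_eq fun t ht => ?_).symm
  rw [Measure.restrict_apply (MeasurableSet.univ_pi ht),
    ← Set.pi_inter_distrib, Measure.pi_pi]
  simp only [mu1, Measure.restrict_apply (ht _)]

lemma restrict_box (n : ℕ) :
    (volume : Measure (Fin n → ℝ)).restrict (Set.univ.pi fun _ => Set.Icc (0:ℝ) 1)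
      = Measure.pi (fun _ : Fin n => mu1) := by
  rw [MeasureTheory.volume_pi]
  exact restrict_pi_pi
section Key

variable {n : ℕ} (i₀ : Fin n)

/-- the coordinate-removal subtype and its complement -/
abbrev restOf (i₀ : Fin n) := {j : Fin n // j ≠ i₀}

noncomputable def piRest (i₀ : Fin n) : Measure (restOf i₀ → ℝ) :=
  Measure.pi (fun _ => mu1)

instance : IsProbabilityMeasure (piRest i₀) := by
  rw [piRest]; infer_instance

lemma key_fubini (F : (restOf i₀ → ℝ) → ℝ) (hF : Measurable F) :
    (∫ x in Set.univ.pi (fun _ : Fin n => Set.Icc (0:ℝ) 1),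
        eps (F (fun j => x j.1) * x i₀))
      = ∫ y, (∫ t, eps (F y * t) ∂mu1) ∂(piRest i₀) := by
  classical
  rw [restrict_box]
  set g : (Fin n → ℝ) → ℝ := fun x => eps (F (fun j => x j.1) * x i₀) with hg
  set p : Fin n → Prop := fun j => j ≠ i₀ with hp
  haveI : Unique {j : Fin n // ¬ p j} :=
    ⟨⟨⟨i₀, not_not_intro rfl⟩⟩, fun j => Subtype.ext (not_not.mp j.2)⟩
  set e := MeasurableEquiv.piEquivPiSubtypeProd (fun _ : Fin n => ℝ) p with he
  have hmp := measurePreserving_piEquivPiSubtypeProd (fun _ : Fin n => mu1) p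
  have h1 : ∫ x, g x ∂(Measure.pi fun _ : Fin n => mu1)
      = ∫ z, g (e.symm z)
          ∂((Measure.pi fun _ : {j // p j} => mu1).prod (Measure.pi fun _ : {j // ¬ p j} => mu1)) := by
    exact ((hmp.symm e).integral_comp e.symm.measurableEmbedding g).symm
  have hsymm : ∀ (y : {j // p j} → ℝ) (u : {j // ¬ p j} → ℝ),
      g (e.symm (y, u)) = eps (F y * u default) := by
    intro y u
    have hrest : (fun j : restOf i₀ => (e.symm (y, u)) j.1) = y := by
      funext j
      show (Equiv.piEquivPiSubtypeProd p (fun _ => ℝ)).symm (y, u) j.1 = y j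
      rw [Equiv.piEquivPiSubtypeProd_symm_apply]
      exact dif_pos j.2
    have hat : (e.symm (y, u)) i₀ = u default := by
      show (Equiv.piEquivPiSubtypeProd p (fun _ => ℝ)).symm (y, u) i₀ = u default
      rw [Equiv.piEquivPiSubtypeProd_symm_apply]
      rw [dif_neg (show ¬ p i₀ from not_not_intro rfl)]
      exact congrArg u (Subsingleton.elim _ _)
    rw [hg]
    simp only []
    rw [hrest, hat]
  have hmeas : Measurable (fun z : ({j // p j} → ℝ) × ({j // ¬ p j} → ℝ) =>
      eps (F z.1 * z.2 default)) := by
    exact measurable_eps.comp ((hF.comp measurable_fst).mul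
      ((measurable_pi_apply default).comp measurable_snd))
  have hint : Integrable (fun z : ({j // p j} → ℝ) × ({j // ¬ p j} → ℝ) =>
      eps (F z.1 * z.2 default))
      ((Measure.pi fun _ : {j // p j} => mu1).prod (Measure.pi fun _ : {j // ¬ p j} => mu1)) := by
    refine Integrable.mono' (integrable_const 1) hmeas.aestronglyMeasurable ?_
    filter_upwards with z
    rw [Real.norm_eq_abs, abs_le]
    exact ⟨by linarith [eps_nonneg (F z.1 * z.2 default)], eps_le_one _⟩
  have h2 : (∫ z, g (e.symm z)
        ∂((Measure.pi fun _ : {j // p j} => mu1).prod (Measure.pi fun _ : {j // ¬ p j} => mu1)))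
      = ∫ y, ∫ u, eps (F y * u default)
          ∂(Measure.pi fun _ : {j // ¬ p j} => mu1) ∂(Measure.pi fun _ : {j // p j} => mu1) := by
    rw [show (fun z : ({j // p j} → ℝ) × ({j // ¬ p j} → ℝ) => g (e.symm z))
        = fun z => eps (F z.1 * z.2 default) from funext fun z => hsymm z.1 z.2]
    exact MeasureTheory.integral_prod _ hint
  have h3 : ∀ y : {j // p j} → ℝ,
      (∫ u, eps (F y * u default) ∂(Measure.pi fun _ : {j // ¬ p j} => mu1))
        = ∫ t, eps (F y * t) ∂mu1 := by
    intro y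
    have := (measurePreserving_piUnique (fun _ : {j // ¬ p j} => mu1)).integral_comp
      (MeasurableEquiv.piUnique (fun _ : {j // ¬ p j} => ℝ)).measurableEmbedding
      (fun t => eps (F y * t))
    exact this
  rw [h1, h2]
  rw [piRest]
  exact integral_congr_ae (Filter.Eventually.of_forall fun y => h3 y)

end Key
section Main

lemma integrand_measurable {n : ℕ} (f : (i : Fin n) → (({j : Fin n // j ≠ i} → ℝ) → ℝ))
    (hf : ∀ i, Measurable (f i)) :
    Measurable (fun x : Fin n → ℝ => ∏ i : Fin n, eps (f i (fun j => x j.1) * x i)) := by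
  apply Finset.measurable_prod
  intro i _
  exact measurable_eps.comp
    (((hf i).comp (measurable_pi_lambda _ fun j => measurable_pi_apply j.1)).mul
      (measurable_pi_apply i))

lemma inner_SM : StronglyMeasurable (fun a : ℝ => ∫ t, eps (a * t) ∂mu1) :=
  (measurable_eps.comp (measurable_fst.mul measurable_snd)).stronglyMeasurable.integral_prod_right'

lemma inner_nonneg (a : ℝ) : 0 ≤ ∫ t, eps (a * t) ∂mu1 := by
  rw [mu1_integral_eps]; exact L_nonneg a

lemma inner_le_half {a : ℝ} (ha : 0 ≤ a) : (∫ t, eps (a * t) ∂mu1) ≤ 1/2 := by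
  rw [mu1_integral_eps]; exact L_le_half ha

lemma inner_ge {a : ℝ} (ha : 0 < a) : 1/2 - 1/(2*a) ≤ ∫ t, eps (a * t) ∂mu1 := by
  rw [mu1_integral_eps]; exact L_ge ha

lemma inner_integrable {n : ℕ} (i₀ : Fin n) (F : (restOf i₀ → ℝ) → ℝ) (hF : Measurable F) :
    Integrable (fun y => ∫ t, eps (F y * t) ∂mu1) (piRest i₀) := by
  refine Integrable.mono' (integrable_const 1)
    ((inner_SM.measurable.comp hF).aestronglyMeasurable) ?_
  filter_upwards with y
  rw [Real.norm_eq_abs, abs_le]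
  constructor
  · linarith [inner_nonneg (F y)]
  · rcases le_or_gt 0 (F y) with h | h
    · linarith [inner_le_half h]
    · have : ∀ t ∈ Set.Icc (0:ℝ) 1, eps (F y * t) ≤ 1 := fun t _ => eps_le_one _
      calc (∫ t, eps (F y * t) ∂mu1) ≤ ∫ _, (1:ℝ) ∂mu1 := by
            apply integral_mono ?_ (integrable_const 1) (fun t => eps_le_one _)
            refine Integrable.mono' (integrable_const 1)
              (measurable_eps.comp (measurable_id.const_mul (F y))|>.aestronglyMeasurable) ?_
            filter_upwards with t
            rw [Real.norm_eq_abs, abs_le]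
            exact ⟨by linarith [eps_nonneg (F y * t)], eps_le_one _⟩
        _ = 1 := by simp [measure_univ]

lemma card_restOf {n : ℕ} (i₀ : Fin n) : Fintype.card (restOf i₀) = n - 1 := by
  have := Fintype.card_subtype_compl (fun j : Fin n => j = i₀)
  simp only [Fintype.card_subtype_eq, Fintype.card_fin] at this
  convert this using 2

end Main
section Final

lemma pointwise_prod_eq {n : ℕ} (hn : 2 ≤ n) (c : ℝ) (hc : 0 ≤ c) (i₀ : Fin n)
    (x : Fin n → ℝ) (hx : x ∈ Set.univ.pi (fun _ : Fin n => Set.Icc (0:ℝ) 1)) :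
    (∏ i : Fin n, eps ((c * ∏ j : {j : Fin n // j ≠ i}, |x j.1|) * x i))
      = eps ((c * ∏ j : {j : Fin n // j ≠ i₀}, |x j.1|) * x i₀) := by
  have hxj : ∀ j : Fin n, (0:ℝ) ≤ x j := fun j => (hx j (Set.mem_univ j)).1
  have hcoord : ∀ i : Fin n,
      (c * ∏ j : {j : Fin n // j ≠ i}, |x j.1|) * x i = c * ∏ j : Fin n, x j := by
    intro i
    have habs : (∏ j : {j : Fin n // j ≠ i}, |x j.1|) = ∏ j : {j : Fin n // j ≠ i}, x j.1 :=
      Finset.prod_congr rfl fun j _ => abs_of_nonneg (hxj j.1)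
    have hsub : (∏ j : {j : Fin n // j ≠ i}, x j.1) = ∏ j ∈ Finset.univ.erase i, x j :=
      (Finset.prod_subtype (Finset.univ.erase i) (fun j => by simp) (fun j => x j)).symm
    rw [habs, hsub, mul_assoc, Finset.prod_erase_mul _ _ (Finset.mem_univ i)]
  rw [hcoord i₀]
  calc (∏ i : Fin n, eps ((c * ∏ j : {j : Fin n // j ≠ i}, |x j.1|) * x i))
      = ∏ _i : Fin n, eps (c * ∏ j : Fin n, x j) :=
        Finset.prod_congr rfl fun i _ => by rw [hcoord i]
    _ = eps (c * ∏ j : Fin n, x j) ^ n := by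
        rw [Finset.prod_const, Finset.card_univ, Fintype.card_fin]
    _ = eps (c * ∏ j : Fin n, x j) := by
        rcases eps_zero_or_one (c * ∏ j : Fin n, x j) with h | h <;> rw [h]
        · exact zero_pow (by omega)
        · exact one_pow n

lemma exists_good (n : ℕ) (hn : 2 ≤ n) {ε : ℝ} (hε : 0 < ε) (hε2 : ε ≤ 1/2) :
    ∃ p ∈ {p : ℝ | ∃ f : (i : Fin n) → (({j : Fin n // j ≠ i} → ℝ) → ℝ),
      (∀ i, Measurable (f i)) ∧ (∀ i x, 0 ≤ f i x) ∧
      p = ∫ x in Set.univ.pi (fun _ : Fin n => Set.Icc (0 : ℝ) 1),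
            ∏ i : Fin n, eps (f i (fun j => x j.1) * x i)}, 1/2 - ε ≤ p := by
  classical
  set i₀ : Fin n := ⟨0, by omega⟩ with hi₀
  set m : ℕ := n - 1 with hm
  have hm1 : 1 ≤ m := by omega
  set η : ℝ := ε / n with hη
  have hηpos : 0 < η := by positivity
  have hη4 : η ≤ 1/4 := by
    rw [hη, div_le_iff₀ (by positivity : (0:ℝ) < n)]
    have : (2:ℝ) ≤ n := by exact_mod_cast hn
    nlinarith
  have hηm : (0:ℝ) < η ^ m := by positivity
  obtain ⟨N₀, hN₀⟩ := exists_nat_ge (1 / (ε * η ^ m))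
  set c : ℝ := (N₀ : ℝ) + 1 with hc
  have hcpos : (0:ℝ) < c := by positivity
  have hcge : 1 / (ε * η ^ m) ≤ c := by rw [hc]; linarith
  set b : ℝ := 1 / (2 * (c * η ^ m)) with hb
  have hbpos : 0 < b := by positivity
  have hbe : b ≤ ε / 2 := by
    have h1 : 1 / ε ≤ c * η ^ m := by
      have h2 : 1 / (ε * η ^ m) * η ^ m ≤ c * η ^ m :=
        mul_le_mul_of_nonneg_right hcge hηm.le
      have h3 : 1 / (ε * η ^ m) * η ^ m = 1 / ε := by field_simp
      linarith [h3 ▸ h2]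
    have h4 : 1 ≤ c * η ^ m * ε := (div_le_iff₀ hε).mp h1
    rw [hb, div_le_div_iff₀ (by positivity) (by norm_num)]
    nlinarith
  -- the strategy
  set f : (i : Fin n) → (({j : Fin n // j ≠ i} → ℝ) → ℝ) :=
    fun i y => c * ∏ j : {j : Fin n // j ≠ i}, |y j| with hf
  have hfm : ∀ i, Measurable (f i) := by
    intro i
    exact (Finset.measurable_prod Finset.univ fun j _ => (measurable_pi_apply j).abs).const_mul c
  have hfpos : ∀ i x, 0 ≤ f i x := by
    intro i x
    exact mul_nonneg hcpos.le (Finset.prod_nonneg fun j _ => abs_nonneg _)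
  refine ⟨_, ⟨f, hfm, hfpos, rfl⟩, ?_⟩
  -- rewrite the integral
  have hboxm : MeasurableSet (Set.univ.pi (fun _ : Fin n => Set.Icc (0:ℝ) 1)) :=
    MeasurableSet.univ_pi fun _ => measurableSet_Icc
  have hcongr : ∫ x in Set.univ.pi (fun _ : Fin n => Set.Icc (0 : ℝ) 1),
        ∏ i : Fin n, eps (f i (fun j => x j.1) * x i)
      = ∫ x in Set.univ.pi (fun _ : Fin n => Set.Icc (0 : ℝ) 1),
        eps (f i₀ (fun j => x j.1) * x i₀) := by
    apply setIntegral_congr_fun hboxm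
    intro x hx
    exact pointwise_prod_eq hn c hcpos.le i₀ x hx
  rw [hcongr, key_fubini i₀ (f i₀) (hfm i₀)]
  -- lower bound the integral over piRest
  set P := piRest i₀
  set inner : ({j : Fin n // j ≠ i₀} → ℝ) → ℝ := fun y => ∫ t, eps (f i₀ y * t) ∂mu1 with hinner
  have hint : Integrable inner P := inner_integrable i₀ (f i₀) (hfm i₀)
  set G : Set ({j : Fin n // j ≠ i₀} → ℝ) :=
    Set.univ.pi (fun _ => Set.Icc (η:ℝ) 1) with hG
  have hGm : MeasurableSet G := MeasurableSet.univ_pi fun _ => measurableSet_Icc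
  have hPG : (P G).toReal = (1 - η) ^ m := by
    have h1 : mu1 (Set.Icc η 1) = ENNReal.ofReal (1 - η) := by
      rw [mu1, Measure.restrict_apply measurableSet_Icc,
        Set.inter_eq_left.mpr (Set.Icc_subset_Icc hηpos.le le_rfl), Real.volume_Icc]
    have h2 : P G = ∏ _j : restOf i₀, mu1 (Set.Icc η 1) := by
      rw [hG]; exact Measure.pi_pi _ _
    rw [h2]
    simp only [h1]
    rw [Finset.prod_const, Finset.card_univ, card_restOf i₀, ← hm,
      ← ENNReal.ofReal_pow (by linarith), ENNReal.toReal_ofReal (pow_nonneg (by linarith) m)]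
  have hstep5 : ∀ y ∈ G, 1/2 - b ≤ inner y := by
    intro y hy
    have hyj : ∀ j, η ≤ y j ∧ y j ≤ 1 := fun j => hy j (Set.mem_univ j)
    have ha : c * η ^ m ≤ f i₀ y := by
      rw [hf]
      apply mul_le_mul_of_nonneg_left ?_ hcpos.le
      calc η ^ m = ∏ _j : {j : Fin n // j ≠ i₀}, η := by
            rw [Finset.prod_const, Finset.card_univ, card_restOf i₀, hm]
        _ ≤ ∏ j : {j : Fin n // j ≠ i₀}, |y j| := by
            apply Finset.prod_le_prod (fun _ _ => hηpos.le)
            intro j _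
            rw [abs_of_nonneg (by linarith [(hyj j).1])]
            exact (hyj j).1
    have hapos : 0 < f i₀ y := lt_of_lt_of_le (by positivity) ha
    calc 1/2 - b ≤ 1/2 - 1/(2 * f i₀ y) := by
          have : 1/(2 * f i₀ y) ≤ b := by
            rw [hb]
            apply one_div_le_one_div_of_le (by positivity)
            nlinarith
          linarith
      _ ≤ inner y := inner_ge hapos
  have hge : (1/2 - b) * (1 - η) ^ m ≤ ∫ y, inner y ∂P := by
    calc (1/2 - b) * (1 - η) ^ m = (1/2 - b) * (P G).toReal := by rw [hPG]
      _ ≤ ∫ y in G, inner y ∂P :=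
          by have := setIntegral_ge_of_const_le hGm (measure_ne_top P G) hstep5 hint.integrableOn
             rw [smul_eq_mul, mul_comm, measureReal_def] at this; exact this
      _ ≤ ∫ y, inner y ∂P :=
          setIntegral_le_integral hint
            (Filter.Eventually.of_forall fun y => inner_nonneg (f i₀ y))
  -- numeric conclusion
  have hmono : 1 - (m:ℝ) * η ≤ (1 - η) ^ m := by
    have := one_add_mul_le_pow (a := -η) (by linarith) m
    calc 1 - (m:ℝ) * η = 1 + (m:ℝ) * (-η) := by ring
      _ ≤ (1 + (-η)) ^ m := this
      _ = (1 - η) ^ m := by ring_nf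
  have hmη : (m:ℝ) * η ≤ ε := by
    have hmn : (m:ℝ) ≤ n := by
      have : m ≤ n := by omega
      exact_mod_cast this
    have hn0 : (0:ℝ) < n := by positivity
    calc (m:ℝ) * (ε / n) ≤ (n:ℝ) * (ε / n) := by
          apply mul_le_mul_of_nonneg_right hmn (by positivity)
      _ = ε := by field_simp
  have hhalfb : 0 ≤ 1/2 - b := by linarith
  calc 1/2 - ε ≤ (1/2 - b) * (1 - (m:ℝ) * η) := by nlinarith
    _ ≤ (1/2 - b) * (1 - η) ^ m := mul_le_mul_of_nonneg_left hmono hhalfb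
    _ ≤ _ := hge

end Final
lemma upper_bound (n : ℕ) (hn : 2 ≤ n)
    (f : (i : Fin n) → (({j : Fin n // j ≠ i} → ℝ) → ℝ))
    (hfm : ∀ i, Measurable (f i)) (hfpos : ∀ i x, 0 ≤ f i x) :
    (∫ x in Set.univ.pi (fun _ : Fin n => Set.Icc (0 : ℝ) 1),
      ∏ i : Fin n, eps (f i (fun j => x j.1) * x i)) ≤ 1/2 := by
  classical
  set i₀ : Fin n := ⟨0, by omega⟩ with hi₀
  have hboxm : MeasurableSet (Set.univ.pi (fun _ : Fin n => Set.Icc (0:ℝ) 1)) :=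
    MeasurableSet.univ_pi fun _ => measurableSet_Icc
  have hpt : ∀ x : Fin n → ℝ,
      (∏ i : Fin n, eps (f i (fun j => x j.1) * x i))
        ≤ eps (f i₀ (fun j => x j.1) * x i₀) := by
    intro x
    rw [← Finset.mul_prod_erase Finset.univ _ (Finset.mem_univ i₀)]
    apply mul_le_of_le_one_right (eps_nonneg _)
    apply Finset.prod_le_one (fun i _ => eps_nonneg _) (fun i _ => eps_le_one _)
  have hintegrable : ∀ g : (Fin n → ℝ) → ℝ, Measurable g →
      (∀ x, 0 ≤ g x) → (∀ x, g x ≤ 1) →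
      IntegrableOn g (Set.univ.pi (fun _ : Fin n => Set.Icc (0:ℝ) 1)) volume := by
    intro g hg h0 h1
    rw [IntegrableOn, restrict_box]
    refine Integrable.mono' (integrable_const 1) hg.aestronglyMeasurable ?_
    filter_upwards with x
    rw [Real.norm_eq_abs, abs_le]
    exact ⟨by linarith [h0 x], h1 x⟩
  have hprodm := integrand_measurable f hfm
  have hsinglem : Measurable (fun x : Fin n → ℝ => eps (f i₀ (fun j => x j.1) * x i₀)) :=
    measurable_eps.comp
      (((hfm i₀).comp (measurable_pi_lambda _ fun j => measurable_pi_apply j.1)).mul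
        (measurable_pi_apply i₀))
  have step1 : (∫ x in Set.univ.pi (fun _ : Fin n => Set.Icc (0 : ℝ) 1),
        ∏ i : Fin n, eps (f i (fun j => x j.1) * x i))
      ≤ ∫ x in Set.univ.pi (fun _ : Fin n => Set.Icc (0 : ℝ) 1),
        eps (f i₀ (fun j => x j.1) * x i₀) := by
    apply integral_mono
    · exact hintegrable _ hprodm
        (fun x => Finset.prod_nonneg fun i _ => eps_nonneg _)
        (fun x => Finset.prod_le_one (fun i _ => eps_nonneg _) (fun i _ => eps_le_one _))
    · exact hintegrable _ hsinglem (fun x => eps_nonneg _) (fun x => eps_le_one _)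
    · exact hpt
  refine step1.trans ?_
  rw [key_fubini i₀ (f i₀) (hfm i₀)]
  have hint : Integrable (fun y => ∫ t, eps (f i₀ y * t) ∂mu1) (piRest i₀) :=
    inner_integrable i₀ (f i₀) (hfm i₀)
  calc (∫ y, (∫ t, eps (f i₀ y * t) ∂mu1) ∂(piRest i₀))
      ≤ ∫ _y, (1/2 : ℝ) ∂(piRest i₀) := by
        apply integral_mono hint (integrable_const _)
        intro y
        exact inner_le_half (hfpos i₀ y)
    _ = 1/2 := by simp [measure_univ]

/-- The continuous Levine hat game has optimal winning probability `1/2`: for `n ≥ 2`,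
the supremum over measurable nonnegative functions `f₁,…,fₙ` on `[0,1]^{n-1}` of
`∫_{[0,1]^n} ∏ᵢ ε(fᵢ(x_{-i}) xᵢ) dΛⁿ` equals `1/2`. -/
theorem continuous_levine_value (n : ℕ) (hn : 2 ≤ n) :
    sSup {p : ℝ | ∃ f : (i : Fin n) → (({j : Fin n // j ≠ i} → ℝ) → ℝ),
      (∀ i, Measurable (f i)) ∧ (∀ i x, 0 ≤ f i x) ∧
      p = ∫ x in Set.univ.pi (fun _ : Fin n => Set.Icc (0 : ℝ) 1),
            ∏ i : Fin n, eps (f i (fun j => x j.1) * x i)} = 1 / 2 := by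
  set S := {p : ℝ | ∃ f : (i : Fin n) → (({j : Fin n // j ≠ i} → ℝ) → ℝ),
      (∀ i, Measurable (f i)) ∧ (∀ i x, 0 ≤ f i x) ∧
      p = ∫ x in Set.univ.pi (fun _ : Fin n => Set.Icc (0 : ℝ) 1),
            ∏ i : Fin n, eps (f i (fun j => x j.1) * x i)} with hS
  have hub : ∀ p ∈ S, p ≤ 1/2 := by
    rintro p ⟨f, hfm, hfpos, rfl⟩
    exact upper_bound n hn f hfm hfpos
  have hne : S.Nonempty := by
    refine ⟨_, ⟨fun i _ => 0, fun i => measurable_const, fun i x => le_rfl, rfl⟩⟩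
  have hbdd : BddAbove S := ⟨1/2, hub⟩
  refine le_antisymm (csSup_le hne hub) ?_
  refine le_of_forall_pos_le_add ?_
  intro ε hε
  set ε' := min ε (1/2) with hε'
  have hε'pos : 0 < ε' := lt_min hε (by norm_num)
  have hε'le : ε' ≤ 1/2 := min_le_right _ _
  obtain ⟨p, hpS, hp⟩ := exists_good n hn hε'pos hε'le
  have h1 : p ≤ sSup S := le_csSup hbdd hpS
  have h2 : ε' ≤ ε := min_le_left _ _
  linarith
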